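/- Fix integers n ≥ 2, m ≥ 1 and a real Λ > 0. For every δ > 0 there exists ε > 0 with the following property. Let a = (a_{αi}) be a real m × n matrix whose singular values λ₁ ≥ λ₂ ≥ ⋯ ≥ λₙ ≥ 0 (so λᵢ² are the eigenvalues of aᵀa) satisfy λ₁λ₂ ≤ Λ. Let b = (b_{ij}) be the n × n matrix b_{ij} = δ_{ij} + Σ_{α=1}^m a_{αi} a_{αj}, let (b^{ij}) be its inverse (which exists since det b ≥ 1), and define ξ_{αj} = √(det b) · Σ_{i=1}^n b^{ij} a_{αi}. If a_{11} ≥ (1 − ε)√(det b), then |ξ_{11}| ≤ 1 + δ. -/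

import Mathlib

set_option maxHeartbeats 1000000

open Finset Matrix

noncomputable section

/-- The singular values of a real `N × n` matrix: square roots of the eigenvalues of `AᵀA`. -/
def singVals {N n : ℕ} (A : Matrix (Fin N) (Fin n) ℝ) : Fin n → ℝ :=
  fun i => Real.sqrt ((Matrix.posSemidef_conjTranspose_mul_self A).1.eigenvalues i)

/-- The matrix `b_{ij} = δ_{ij} + Σ_α a_{αi} a_{αj}`. -/
def bMat {N n : ℕ} (a : Matrix (Fin N) (Fin n) ℝ) : Matrix (Fin n) (Fin n) ℝ :=
  fun i j => (if i = j then (1 : ℝ) else 0) + ∑ α : Fin N, a α i * a α j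


lemma one_le_prodR {α : Type*} (s : Finset α) (f : α → ℝ) (h : ∀ i ∈ s, 1 ≤ f i) :
    (1:ℝ) ≤ ∏ i ∈ s, f i :=
  le_trans (by simp) (Finset.prod_le_prod (fun i _ => zero_le_one) h)

lemma tail_bound (L δ ε P q2 : ℝ) (hL : 0 ≤ L) (hε0 : 0 < ε)
    (hεδ : 100 * ε * (1 + L) ≤ δ) (hεs : 100 * ε * (1 + L) ≤ 1)
    (hP1 : 1 ≤ P) (hPle : (1 - ε) ^ 2 * P ≤ 1)
    (hq20 : 0 ≤ q2) (hq2small : q2 ≤ 5 * ε) :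
    P + (P * (4 * ε * L + L)) * q2 ≤ 1 + δ := by
  have hε100 : ε ≤ 1 / 100 := by nlinarith
  have h1ε : (0:ℝ) < 1 - ε := by linarith
  have hone : (1:ℝ) ≤ (1 + 3 * ε) * (1 - ε) ^ 2 := by
    nlinarith [hε0, hε100, sq_nonneg ε, mul_nonneg hε0.le (sq_nonneg ε)]
  have hP3 : P ≤ 1 + 3 * ε := by
    have h0 : (0:ℝ) < (1 - ε) ^ 2 := pow_pos h1ε 2
    have heq9 : (1 + 3 * ε) * (1 - ε) ^ 2 = (1 - ε) ^ 2 * (1 + 3 * ε) := by ring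
    have hh : (1 - ε) ^ 2 * P ≤ (1 - ε) ^ 2 * (1 + 3 * ε) := by linarith
    exact le_of_mul_le_mul_left hh h0
  have hA : P * (4 * ε * L + L) ≤ 2 * (1 + L) := by
    have ha1 : 4 * ε * L + L ≤ (3/2) * (1 + L) := by
      nlinarith [mul_nonneg (by linarith : (0:ℝ) ≤ 1/100 - ε) hL, hL]
    have ha2 : P * (4 * ε * L + L) ≤ P * ((3/2) * (1 + L)) :=
      mul_le_mul_of_nonneg_left ha1 (by linarith)
    have ha3 : P * ((3/2) * (1 + L)) ≤ (1 + 3 * ε) * ((3/2) * (1 + L)) :=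
      mul_le_mul_of_nonneg_right hP3 (by linarith)
    have ha4 : (1 + 3 * ε) * ((3/2) * (1 + L)) ≤ 2 * (1 + L) := by
      nlinarith [mul_nonneg (by linarith : (0:ℝ) ≤ 1/100 - ε) hL, hε100, hL]
    linarith
  have hB2 : (P * (4 * ε * L + L)) * q2 ≤ 2 * (1 + L) * (5 * ε) :=
    mul_le_mul hA hq2small hq20 (by linarith)
  linarith [hεδ, mul_nonneg hε0.le hL]

lemma scalar_key {n : ℕ} [NeZero n] (L δ ε : ℝ) (hL : 0 ≤ L) (hδ : 0 < δ)
    (hε0 : 0 < ε) (hεδ : 100 * ε * (1 + L) ≤ δ) (hεs : 100 * ε * (1 + L) ≤ 1)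
    (γ c : Fin n → ℝ) (hγ : ∀ i, 0 ≤ γ i)
    (hpair : ∀ i j, i ≠ j → γ i * γ j ≤ L)
    (hc : ∑ i, c i ^ 2 = 1)
    (hyp : (1 - ε) ^ 2 * ∏ i, (1 + γ i) ≤ ∑ i, γ i * c i ^ 2) :
    (∏ i, (1 + γ i)) * ∑ i, (c i / (1 + γ i)) ^ 2 * γ i ≤ 1 + δ := by
  have h1L : (1:ℝ) ≤ 1 + L := by linarith
  have hε100 : ε ≤ 1 / 100 := by nlinarith
  obtain ⟨i₀, -, hmax⟩ := Finset.exists_max_image (univ : Finset (Fin n)) γ univ_nonempty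
  replace hmax : ∀ i, γ i ≤ γ i₀ := fun i => hmax i (mem_univ i)
  set g := γ i₀ with hgdef
  set B := 1 + g with hBdef
  set P := ∏ i ∈ univ.erase i₀, (1 + γ i) with hPdef
  have hDBP : ∏ i, (1 + γ i) = B * P := (Finset.mul_prod_erase univ _ (mem_univ i₀)).symm
  have hg0 : 0 ≤ g := hγ i₀
  have hB1 : 1 ≤ B := by linarith
  have hP1 : 1 ≤ P := one_le_prodR _ _ fun i _ => by linarith [hγ i]
  have hsum_le : ∑ i, γ i * c i ^ 2 ≤ g :=
    calc ∑ i, γ i * c i ^ 2 ≤ ∑ i, g * c i ^ 2 :=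
          Finset.sum_le_sum fun i _ => mul_le_mul_of_nonneg_right (hmax i) (sq_nonneg _)
    _ = g := by rw [← Finset.mul_sum, hc, mul_one]
  have hkey : (1 - ε) ^ 2 * (B * P) ≤ g := by
    rw [← hDBP]; exact hyp.trans hsum_le
  have hBP' : (1 - ε) ^ 2 * B ≤ (1 - ε) ^ 2 * (B * P) := by
    nlinarith [mul_nonneg (mul_nonneg (sq_nonneg (1 - ε)) (by linarith : (0:ℝ) ≤ B))
      (by linarith : (0:ℝ) ≤ P - 1)]
  have h2 : (1 - ε) ^ 2 * B ≤ g := hBP'.trans hkey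
  have h4 : 1 ≤ 4 * ε * g := by nlinarith
  have hgpos : 0 < g := by nlinarith
  have hPle : (1 - ε) ^ 2 * P ≤ 1 := by nlinarith
  have hsmall : ∀ i, i ≠ i₀ → γ i ≤ 4 * ε * L := by
    intro i hi
    have h5 := hpair i i₀ hi
    nlinarith [hγ i]
  set q2 := ∑ i ∈ univ.erase i₀, c i ^ 2 with hq2def
  have hq2' : c i₀ ^ 2 + q2 = 1 := by
    rw [hq2def, Finset.add_sum_erase univ (fun i => c i ^ 2) (mem_univ i₀), hc]
  have hq20 : 0 ≤ q2 := Finset.sum_nonneg fun i _ => sq_nonneg _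
  have hc01 : c i₀ ^ 2 ≤ 1 := by linarith
  have hsplit : ∑ i, γ i * c i ^ 2 ≤ g * c i₀ ^ 2 + 4 * ε * L * q2 := by
    rw [← Finset.add_sum_erase univ (fun i => γ i * c i ^ 2) (mem_univ i₀), hq2def,
      Finset.mul_sum]
    refine add_le_add le_rfl (Finset.sum_le_sum fun i hi => ?_)
    exact mul_le_mul_of_nonneg_right (hsmall i (Finset.ne_of_mem_erase hi)) (sq_nonneg _)
  have hkey2 : (1 - ε) ^ 2 * (B * P) ≤ g * c i₀ ^ 2 + 4 * ε * L * q2 := by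
    rw [← hDBP]; exact hyp.trans hsplit
  have h2' : (1 - ε) ^ 2 * B ≤ g * c i₀ ^ 2 + 4 * ε * L * q2 := hBP'.trans hkey2
  have hg25 : 25 * (1 + L) ≤ g := by nlinarith
  have hLg : 4 * ε * L ≤ g / 2 := by nlinarith
  have e0 : c i₀ ^ 2 = 1 - q2 := by linarith
  have e2 : g * c i₀ ^ 2 + 4 * ε * L * q2 = g - q2 * (g - 4 * ε * L) := by
    rw [e0]; ring
  have h2'' : (1 - ε) ^ 2 * (1 + g) ≤ g - q2 * (g - 4 * ε * L) := by
    rw [← e2]; exact h2'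
  have hq' : q2 * (g / 2) ≤ q2 * (g - 4 * ε * L) :=
    mul_le_mul_of_nonneg_left (by linarith) hq20
  have hq'' : g - (1 - ε) ^ 2 * (1 + g) ≤ 2 * ε * (g + 1) := by
    nlinarith [sq_nonneg ε, hg0, mul_nonneg (mul_nonneg hε0.le hε0.le) hg0]
  have hq : q2 * (g / 2) ≤ 2 * ε * (g + 1) := by linarith
  have hεg : ε * 25 ≤ ε * g := mul_le_mul_of_nonneg_left (by linarith) hε0.le
  have hq2small : q2 ≤ 5 * ε := by
    nlinarith [hq, hεg, hq20, hgpos, hε0, mul_pos hε0 hgpos]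
  have hβ1 : ∀ i, (1:ℝ) ≤ 1 + γ i := fun i => by linarith [hγ i]
  have hsum2 : ∑ i, (c i / (1 + γ i)) ^ 2 * γ i
      ≤ (c i₀ / B) ^ 2 * g + ∑ i ∈ univ.erase i₀, c i ^ 2 * γ i := by
    rw [← Finset.add_sum_erase univ (fun i => (c i / (1 + γ i)) ^ 2 * γ i) (mem_univ i₀)]
    refine add_le_add le_rfl (Finset.sum_le_sum fun i _ => ?_)
    refine mul_le_mul_of_nonneg_right ?_ (hγ i)
    rw [div_pow]
    exact div_le_self (sq_nonneg _) (by nlinarith [hβ1 i])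
  have hterm₀ : (B * P) * ((c i₀ / B) ^ 2 * g) ≤ P := by
    have hBpos : (0:ℝ) < B := by linarith
    have heq : (B * P) * ((c i₀ / B) ^ 2 * g) = P * ((c i₀ ^ 2 * g) / B) := by
      field_simp
    rw [heq]
    have h6 : (c i₀ ^ 2 * g) / B ≤ 1 := by
      rw [div_le_one hBpos]
      nlinarith [mul_nonneg (by linarith : (0:ℝ) ≤ 1 - c i₀ ^ 2) hg0]
    calc P * ((c i₀ ^ 2 * g) / B) ≤ P * 1 :=
          mul_le_mul_of_nonneg_left h6 (by linarith)
      _ = P := mul_one P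
  have hfin2 : (B * P) * ∑ i ∈ univ.erase i₀, c i ^ 2 * γ i ≤ (P * (4 * ε * L + L)) * q2 := by
    rw [hq2def, Finset.mul_sum, Finset.mul_sum]
    refine Finset.sum_le_sum fun i hi => ?_
    have hgi : γ i * γ i₀ ≤ L := hpair i i₀ (Finset.ne_of_mem_erase hi)
    have h1 : B * γ i ≤ 4 * ε * L + L := by
      have h1a := hsmall i (Finset.ne_of_mem_erase hi)
      have h1b : B * γ i = γ i + γ i * γ i₀ := by rw [hBdef, hgdef]; ring
      rw [h1b]
      linarith
    calc (B * P) * (c i ^ 2 * γ i) = (B * γ i) * (P * c i ^ 2) := by ring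
      _ ≤ (4 * ε * L + L) * (P * c i ^ 2) :=
          mul_le_mul_of_nonneg_right h1 (mul_nonneg (by linarith) (sq_nonneg _))
      _ = (P * (4 * ε * L + L)) * c i ^ 2 := by ring
  have hgoal1 : (∏ i, (1 + γ i)) * ∑ i, (c i / (1 + γ i)) ^ 2 * γ i
      ≤ P + (P * (4 * ε * L + L)) * q2 := by
    rw [hDBP]
    have hBP0 : (0:ℝ) ≤ B * P := mul_nonneg (by linarith) (by linarith)
    calc (B * P) * ∑ i, (c i / (1 + γ i)) ^ 2 * γ i
        ≤ (B * P) * ((c i₀ / B) ^ 2 * g + ∑ i ∈ univ.erase i₀, c i ^ 2 * γ i) :=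
          mul_le_mul_of_nonneg_left hsum2 hBP0
      _ = (B * P) * ((c i₀ / B) ^ 2 * g)
            + (B * P) * ∑ i ∈ univ.erase i₀, c i ^ 2 * γ i := by ring
      _ ≤ P + (P * (4 * ε * L + L)) * q2 := add_le_add hterm₀ hfin2
  exact hgoal1.trans (tail_bound L δ ε P q2 hL hε0 hεδ hεs hP1 hPle hq20 hq2small)

lemma sum_sq_of_orth {m n : ℕ} (M : Matrix (Fin m) (Fin n) ℝ) (γ : Fin n → ℝ)
    (h : ∀ j k, (∑ α, M α j * M α k) = if j = k then γ j else 0) (x : Fin n → ℝ) :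
    ∑ α, (∑ j, M α j * x j) ^ 2 = ∑ j, x j ^ 2 * γ j := by
  have step1 : ∀ α : Fin m, (∑ j, M α j * x j) ^ 2
      = ∑ j, ∑ k, (M α j * x j) * (M α k * x k) := by
    intro α; rw [sq, Finset.sum_mul_sum]
  rw [Finset.sum_congr rfl fun α _ => step1 α]
  rw [Finset.sum_comm]
  have step2 : ∀ j : Fin n, (∑ α, ∑ k, (M α j * x j) * (M α k * x k))
      = ∑ k, (x j * x k) * ∑ α, M α j * M α k := by
    intro j
    rw [Finset.sum_comm]
    refine Finset.sum_congr rfl fun k _ => ?_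
    rw [Finset.mul_sum]
    exact Finset.sum_congr rfl fun α _ => by ring
  rw [Finset.sum_congr rfl fun j _ => step2 j]
  refine Finset.sum_congr rfl fun j _ => ?_
  simp only [h, mul_ite, mul_zero]
  rw [Finset.sum_ite_eq univ j fun k => x j * x k * γ j]
  simp only [Finset.mem_univ, if_true]
  ring

lemma xi_aux {m n : ℕ} [NeZero n] (a : Matrix (Fin m) (Fin n) ℝ)
    (Λ δ : ℝ) (hΛ : 0 ≤ Λ) (hδ : 0 < δ) (p : Fin m) (z : Fin n)
    (hsing : ∀ i j : Fin n, i ≠ j → singVals a i * singVals a j ≤ Λ)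
    (hyp : (1 - min δ 1 / (100 * (1 + Λ ^ 2))) * Real.sqrt (bMat a).det ≤ a p z) :
    |Real.sqrt (bMat a).det * ∑ i : Fin n, (bMat a)⁻¹ i z * a p i| ≤ 1 + δ := by
  classical
  set L := Λ ^ 2 with hLdef
  have hL : 0 ≤ L := sq_nonneg Λ
  set ε := min δ 1 / (100 * (1 + L)) with hεdef
  have h1L : (1:ℝ) ≤ 1 + L := by linarith
  have hε0 : 0 < ε := by
    have : 0 < min δ 1 := lt_min hδ one_pos
    positivity
  have hεmin : ε * (100 * (1 + L)) = min δ 1 := by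
    rw [hεdef]; field_simp
  have hεδ2 : 100 * ε * (1 + L) ≤ δ := by
    have h := min_le_left δ 1; linarith [hεmin.le.trans h]
  have hεs2 : 100 * ε * (1 + L) ≤ 1 := by
    have h := min_le_right δ 1; linarith [hεmin.le.trans h]
  have hε1 : ε ≤ 1 := by nlinarith
  -- spectral setup
  have hps := Matrix.posSemidef_conjTranspose_mul_self a
  set γ : Fin n → ℝ := hps.1.eigenvalues with hγdef
  have hγ0 : ∀ i, 0 ≤ γ i := fun i => hps.eigenvalues_nonneg i
  have hpair : ∀ i j, i ≠ j → γ i * γ j ≤ L := by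
    intro i j hij
    have h := hsing i j hij
    have h1 : Real.sqrt (γ i) * Real.sqrt (γ j) ≤ Λ := h
    calc γ i * γ j = (Real.sqrt (γ i) * Real.sqrt (γ j)) ^ 2 := by
          rw [mul_pow, Real.sq_sqrt (hγ0 i), Real.sq_sqrt (hγ0 j)]
      _ ≤ Λ ^ 2 := pow_le_pow_left₀ (mul_nonneg (Real.sqrt_nonneg _) (Real.sqrt_nonneg _)) h1 2
  set U : Matrix (Fin n) (Fin n) ℝ := (hps.1.eigenvectorUnitary : Matrix (Fin n) (Fin n) ℝ)
    with hUdef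
  have hU1 : U * star U = 1 := Matrix.mem_unitaryGroup_iff.mp hps.1.eigenvectorUnitary.2
  have h1U : star U * U = 1 := mul_eq_one_comm.mp hU1
  have hspec : aᴴ * a = U * Matrix.diagonal γ * star U := by
    have h := hps.1.spectral_theorem
    simp only [Unitary.conjStarAlgAut_apply] at h
    simpa [hUdef, hγdef] using h
  set β : Fin n → ℝ := fun i => 1 + γ i with hβdef
  have hβ1 : ∀ i, (1:ℝ) ≤ β i := fun i => by simp [hβdef]; linarith [hγ0 i]
  have hβpos : ∀ i, (0:ℝ) < β i := fun i => lt_of_lt_of_le one_pos (hβ1 i)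
  have hbm : bMat a = 1 + aᴴ * a := by
    ext i j
    simp [bMat, Matrix.add_apply, Matrix.one_apply, Matrix.mul_apply,
      Matrix.conjTranspose_apply]
  have hbspec : bMat a = U * Matrix.diagonal β * star U := by
    rw [hbm, hspec]
    have : Matrix.diagonal β = 1 + Matrix.diagonal γ := by
      rw [← Matrix.diagonal_one, Matrix.diagonal_add]
    rw [this, Matrix.mul_add, Matrix.add_mul, Matrix.mul_one, hU1]
  have hdet : (bMat a).det = ∏ i, β i := by
    rw [hbspec, Matrix.det_mul, Matrix.det_mul, Matrix.det_diagonal]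
    have h7 : U.det * (star U).det = 1 := by rw [← Matrix.det_mul, hU1, Matrix.det_one]
    calc U.det * (∏ i, β i) * (star U).det = (U.det * (star U).det) * ∏ i, β i := by ring
      _ = ∏ i, β i := by rw [h7, one_mul]
  have hD1 : (1:ℝ) ≤ ∏ i, β i := one_le_prodR _ _ fun i _ => hβ1 i
  have hinv : (bMat a)⁻¹ = U * Matrix.diagonal (fun i => (β i)⁻¹) * star U := by
    apply Matrix.inv_eq_right_inv
    rw [hbspec]
    have key : (U * Matrix.diagonal β * star U) * (U * Matrix.diagonal (fun i => (β i)⁻¹) * star U)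
        = U * (Matrix.diagonal β * (star U * U) * Matrix.diagonal (fun i => (β i)⁻¹)) * star U := by
      simp only [Matrix.mul_assoc]
    rw [key, h1U, Matrix.mul_one, Matrix.diagonal_mul_diagonal]
    have : (fun i => β i * (β i)⁻¹) = fun _ : Fin n => (1:ℝ) :=
      funext fun i => mul_inv_cancel₀ (ne_of_gt (hβpos i))
    rw [this]
    have hdid : Matrix.diagonal (fun _ : Fin n => (1:ℝ)) = 1 := Matrix.diagonal_one
    rw [hdid, Matrix.mul_one, hU1]
  set M : Matrix (Fin m) (Fin n) ℝ := a * U with hMdef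
  set c : Fin n → ℝ := fun j => U z j with hcdef
  have hMM : ∀ j k, (∑ α, M α j * M α k) = if j = k then γ j else 0 := by
    have hMMmat : Mᴴ * M = Matrix.diagonal γ := by
      rw [hMdef, Matrix.conjTranspose_mul]
      calc Uᴴ * aᴴ * (a * U) = Uᴴ * (aᴴ * a) * U := by simp only [Matrix.mul_assoc]
        _ = Uᴴ * (U * Matrix.diagonal γ * star U) * U := by rw [hspec]
        _ = (Uᴴ * U) * Matrix.diagonal γ * (star U * U) := by simp only [Matrix.mul_assoc]
        _ = Matrix.diagonal γ := by
            rw [← Matrix.star_eq_conjTranspose, h1U, Matrix.one_mul, Matrix.mul_one]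
    intro j k
    have h10 : (Mᴴ * M) j k = ∑ α, M α j * M α k := by
      rw [Matrix.mul_apply]
      exact Finset.sum_congr rfl fun α _ => by
        rw [Matrix.conjTranspose_apply, star_trivial]
    rw [← h10, hMMmat, Matrix.diagonal_apply]
  have hsumc : ∑ j, c j ^ 2 = 1 := by
    have h11 : (U * star U) z z = ∑ j, U z j * U z j := by
      rw [Matrix.mul_apply]
      exact Finset.sum_congr rfl fun j _ => by
        rw [Matrix.star_apply, star_trivial]
    have h12 : (U * star U) z z = 1 := by rw [hU1, Matrix.one_apply_eq]
    calc ∑ j, c j ^ 2 = ∑ j, U z j * U z j :=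
          Finset.sum_congr rfl fun j _ => by rw [hcdef]; exact pow_two _
      _ = (U * star U) z z := h11.symm
      _ = 1 := h12
  have haMU : a = M * star U := by
    rw [hMdef, Matrix.mul_assoc, hU1, Matrix.mul_one]
  have hapz : a p z = ∑ j, M p j * c j := by
    conv_lhs => rw [haMU]
    rw [Matrix.mul_apply]
    exact Finset.sum_congr rfl fun j _ => by
      simp [Matrix.star_apply, star_trivial, hcdef]
  -- hypothesis squared
  have hata : ∑ α, (a α z) ^ 2 = ∑ j, γ j * c j ^ 2 := by
    have h1 : (aᴴ * a) z z = ∑ α, (a α z) ^ 2 := by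
      rw [Matrix.mul_apply]
      exact Finset.sum_congr rfl fun α _ => by
        simp [Matrix.conjTranspose_apply, sq]
    have h2 : (U * Matrix.diagonal γ * star U) z z = ∑ j, γ j * c j ^ 2 := by
      rw [Matrix.mul_apply]
      refine Finset.sum_congr rfl fun j _ => ?_
      rw [Matrix.mul_diagonal]
      simp only [Matrix.star_apply, star_trivial]
      rw [hcdef]; ring
    rw [← h1, hspec, h2]
  have hDnn : (0:ℝ) ≤ (∏ i, β i) := by linarith
  have hsqrtD : Real.sqrt ((bMat a).det) ^ 2 = ∏ i, β i := by
    rw [hdet, Real.sq_sqrt hDnn]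
  have hyp2 : (1 - ε) ^ 2 * ∏ i, (1 + γ i) ≤ ∑ j, γ j * c j ^ 2 := by
    have hlhs : (0:ℝ) ≤ (1 - ε) * Real.sqrt (bMat a).det :=
      mul_nonneg (by linarith) (Real.sqrt_nonneg _)
    have hsq : ((1 - ε) * Real.sqrt (bMat a).det) ^ 2 ≤ (a p z) ^ 2 :=
      pow_le_pow_left₀ hlhs hyp 2
    have h3 : (a p z) ^ 2 ≤ ∑ α, (a α z) ^ 2 :=
      Finset.single_le_sum (f := fun α => (a α z) ^ 2) (fun α _ => sq_nonneg _) (mem_univ p)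
    have h4 : ((1 - ε) * Real.sqrt (bMat a).det) ^ 2 = (1 - ε) ^ 2 * ∏ i, β i := by
      rw [mul_pow, hsqrtD]
    have hβγ : (∏ i, β i) = ∏ i, (1 + γ i) := rfl
    rw [← hβγ]
    calc (1 - ε) ^ 2 * ∏ i, β i = ((1 - ε) * Real.sqrt (bMat a).det) ^ 2 := h4.symm
      _ ≤ (a p z) ^ 2 := hsq
      _ ≤ ∑ α, (a α z) ^ 2 := h3
      _ = ∑ j, γ j * c j ^ 2 := hata
  -- the sum T
  have hTT : ∑ i, (bMat a)⁻¹ i z * a p i = ∑ j, M p j * (c j / β j) := by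
    rw [hinv]
    have h1 : ∀ i, (U * Matrix.diagonal (fun k => (β k)⁻¹) * star U) i z
        = ∑ j, U i j * (β j)⁻¹ * U z j := by
      intro i
      rw [Matrix.mul_apply]
      refine Finset.sum_congr rfl fun j _ => ?_
      rw [Matrix.mul_diagonal]
      simp [Matrix.star_apply]
    calc ∑ i, (U * Matrix.diagonal (fun k => (β k)⁻¹) * star U) i z * a p i
        = ∑ i, (∑ j, U i j * (β j)⁻¹ * U z j) * a p i :=
          Finset.sum_congr rfl fun i _ => by rw [h1 i]
      _ = ∑ i, ∑ j, U i j * (β j)⁻¹ * U z j * a p i :=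
          Finset.sum_congr rfl fun i _ => Finset.sum_mul _ _ _
      _ = ∑ j, ∑ i, U i j * (β j)⁻¹ * U z j * a p i := Finset.sum_comm
      _ = ∑ j, M p j * (c j / β j) := by
          refine Finset.sum_congr rfl fun j _ => ?_
          rw [hMdef, Matrix.mul_apply, Finset.sum_mul]
          simp only [div_eq_mul_inv, hcdef]
          exact Finset.sum_congr rfl fun i _ => by ring
  have hCS : (∑ j, M p j * (c j / β j)) ^ 2 ≤ ∑ j, (c j / β j) ^ 2 * γ j := by
    have horth := sum_sq_of_orth M γ hMM (fun j => c j / β j)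
    have h9 : (∑ j, M p j * (c j / β j)) ^ 2 ≤ ∑ α, (∑ j, M α j * (c j / β j)) ^ 2 :=
      Finset.single_le_sum (f := fun α => (∑ j, M α j * (c j / β j)) ^ 2)
        (fun α _ => sq_nonneg _) (mem_univ p)
    exact h9.trans_eq horth
  have hscal : (∏ i, (1 + γ i)) * ∑ j, (c j / (1 + γ j)) ^ 2 * γ j ≤ 1 + δ :=
    scalar_key L δ ε hL hδ hε0 hεδ2 hεs2 γ c hγ0 hpair hsumc hyp2
  have hfinal : (Real.sqrt ((bMat a).det) * ∑ i, (bMat a)⁻¹ i z * a p i) ^ 2 ≤ 1 + δ := by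
    rw [mul_pow, hsqrtD, hTT]
    calc (∏ i, β i) * (∑ j, M p j * (c j / β j)) ^ 2
        ≤ (∏ i, β i) * ∑ j, (c j / β j) ^ 2 * γ j :=
          mul_le_mul_of_nonneg_left hCS hDnn
      _ ≤ 1 + δ := hscal
  set x := Real.sqrt ((bMat a).det) * ∑ i, (bMat a)⁻¹ i z * a p i with hxdef
  nlinarith [sq_nonneg (|x| - (1 + δ)), sq_abs x, abs_nonneg x, hfinal, hδ]

/-- **Lemma 9.1 (Appendix I)**. Fix `n ≥ 2`, `m ≥ 1`, `Λ > 0`. For every `δ > 0` there is an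
`ε > 0` such that for every real `m × n` matrix `a` whose singular values satisfy
`λ₁λ₂ ≤ Λ` (encoded by all pairwise products of distinct singular values being `≤ Λ`),
if `a₁₁ ≥ (1 − ε)√(det b)` where `b = Iₙ + aᵀa`, then
`|ξ₁₁| = |√(det b) · Σᵢ b^{i1} a_{1i}| ≤ 1 + δ`. -/
theorem xi_estimate
    (n m : ℕ) (hn : 2 ≤ n) (hm : 1 ≤ m) (Λ : ℝ) (hΛ : 0 < Λ)
    (δ : ℝ) (hδ : 0 < δ) :
    ∃ ε : ℝ, 0 < ε ∧
      ∀ a : Matrix (Fin m) (Fin n) ℝ,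
        (∀ i j : Fin n, i ≠ j → singVals a i * singVals a j ≤ Λ) →
        (1 - ε) * Real.sqrt (bMat a).det ≤ a ⟨0, by omega⟩ ⟨0, by omega⟩ →
        |Real.sqrt (bMat a).det *
            ∑ i : Fin n, (bMat a)⁻¹ i ⟨0, by omega⟩ * a ⟨0, by omega⟩ i| ≤ 1 + δ := by
  have : NeZero n := ⟨by omega⟩
  refine ⟨min δ 1 / (100 * (1 + Λ ^ 2)), by positivity, ?_⟩
  intro a hsing hyp
  exact xi_aux a Λ δ hΛ.le hδ _ _ hsing hyp
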